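/- Let a, b, c, d, p, q, r, s be integers with a, b, c, d > 0, a·p + b·q = 1 + a·b, c·r + d·s = 1 + c·d, 1 ≤ q ≤ a − 1 and 1 ≤ p ≤ b − 1. Set u = a·c + b·d, x₁ = a·s + b·(d − r) and y₁ = c·(a − q) + d·p. Then 1 ≤ y₁ ≤ u − 1 and x₁·y₁ ≡ 1 (mod u); that is, y₁ is the modular inverse of x₁ modulo u. -/
import Mathlib


theorem inverse_in_range_positive_case
    (a b c d p q r s : ℤ)
    (ha : 0 < a) (hb : 0 < b) (hc : 0 < c) (hd : 0 < d)
    (hab : a * p + b * q = 1 + a * b)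
    (hcd : c * r + d * s = 1 + c * d)
    (hq : 1 ≤ q ∧ q ≤ a - 1) (hp : 1 ≤ p ∧ p ≤ b - 1) :
    1 ≤ c * (a - q) + d * p ∧ c * (a - q) + d * p ≤ (a * c + b * d) - 1 ∧
    (a * s + b * (d - r)) * (c * (a - q) + d * p) ≡ 1 [ZMOD a * c + b * d] := by
  obtain ⟨hq1, hq2⟩ := hq
  obtain ⟨hp1, hp2⟩ := hp
  refine ⟨by nlinarith, by nlinarith, ?_⟩
  have hdvd : (a * c + b * d) ∣
      (1 - (a * s + b * (d - r)) * (c * (a - q) + d * p)) :=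
    ⟨-(a * c - c * q + d * p - p * r + (a - q) * (s - c)), by
      linear_combination (c * d - c * r - d * s) * hab - hcd⟩
  have := Int.modEq_iff_dvd.mpr hdvd
  simpa using this
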